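/- arXiv:1310.0177 — 10 statements merged into one kernel-verified Lean document; each statement's English description precedes it below -/
import Mathlib

section
/- Consider the multiplicative price update algorithm on m goods each of supply b: initial uniform price p_0, update factor r > 1, processing bidders in a fixed order and allocating to each bidder i the set S_i in her demand collection of maximum value among sets S with v_i(S) >= sum of current prices of goods in S, then multiplying the prices of goods in S_i by r. If mu satisfies mu/2 <= v_max < mu and p_0 * r^b = mu, then the produced allocation assigns at most b copies of each good. -/
/-!
STATEMENT 5: Feasibility of the multiplicative price update algorithm.  Bidders
`0,…,n-1` are processed in order; when bidder `i` is reached, the current price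
of good `e` is `p₀ * r ^ (load S i e)` where `load S i e` counts the copies of
`e` allocated to earlier bidders; bidder `i` receives a demanded set `S i` whose
valuation is at least the sum of the current prices of its goods (or `∅`).  If
`μ/2 ≤ v_max < μ` and `p₀ * r ^ b = μ`, the produced allocation assigns at most
`b` copies of each good.
-/

open scoped BigOperators

/-- Number of copies of good `e` allocated to bidders preceding `i`. -/
def load {U : Type} [DecidableEq U] {n : ℕ} (S : Fin n → Finset U)
    (i : Fin n) (e : U) : ℕ :=
  (Finset.univ.filter fun j : Fin n => j < i ∧ e ∈ S j).card

theorem multiplicativePriceUpdate_feasible {U : Type} [DecidableEq U] {n : ℕ}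
    (v : Fin n → Finset U → ℝ)        -- valuations
    (S : Fin n → Finset U)            -- the sets allocated by the algorithm
    (p₀ r μ vmax : ℝ) (b : ℕ)
    (hp₀ : 0 < p₀) (hr : 1 < r)
    (hvmax : ∀ i T, v i T ≤ vmax)
    (hμ₁ : μ / 2 ≤ vmax) (hμ₂ : vmax < μ)
    (hpr : p₀ * r ^ b = μ)
    -- each allocated (nonempty) set has valuation at least the sum of the
    -- current prices of its goods:
    (halg : ∀ i : Fin n, S i ≠ ∅ →
      (∑ e ∈ S i, p₀ * r ^ load S i e) ≤ v i (S i)) :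
    ∀ e : U, (Finset.univ.filter fun j : Fin n => e ∈ S j).card ≤ b := by
  intro e
  have hkey : ∀ i : Fin n, e ∈ S i → load S i e < b := by
    intro i hi
    by_contra h
    push_neg at h
    have h1 : μ ≤ p₀ * r ^ load S i e := by
      rw [← hpr]
      gcongr
      exact hr.le
    have h2 : p₀ * r ^ load S i e ≤ ∑ e' ∈ S i, p₀ * r ^ load S i e' :=
      Finset.single_le_sum (f := fun e' => p₀ * r ^ load S i e') (fun x _ => by positivity) hi
    have h3 := halg i (Finset.ne_empty_of_mem hi)
    have h4 := hvmax i (S i)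
    linarith
  by_contra h
  push_neg at h
  set F := Finset.univ.filter fun j : Fin n => e ∈ S j with hF
  have hne : F.Nonempty := Finset.card_pos.mp (by omega)
  set j := F.max' hne with hj
  have hjF : j ∈ F := F.max'_mem hne
  have hjS : e ∈ S j := (Finset.mem_filter.mp hjF).2
  have hsub : F.erase j ⊆ Finset.univ.filter fun j' : Fin n => j' < j ∧ e ∈ S j' := by
    intro x hx
    have hx1 := Finset.mem_of_mem_erase hx
    have hx2 := Finset.ne_of_mem_erase hx
    have hx3 : e ∈ S x := (Finset.mem_filter.mp hx1).2
    simp only [Finset.mem_filter, Finset.mem_univ, true_and]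
    exact ⟨lt_of_le_of_ne (F.le_max' x hx1) hx2, hx3⟩
  have hcard : F.card - 1 ≤ load S j e := by
    have := Finset.card_le_card hsub
    rw [Finset.card_erase_of_mem hjF] at this
    exact this
  have := hkey j hjS
  omega
end

section
/- For the multiplicative price update algorithm with initial price p_0 and update factor r > 1, the social welfare v(S) = sum_i v_i(S_i) of the produced allocation satisfies v(S) >= (1/(r-1)) * (sum over goods e of p_e^* - m*p_0), where p_e^* = p_0 * r^{l_e^*} is the final price of good e and l_e^* is the total number of copies of e allocated. -/
/-!
STATEMENT 6 (first bound of Lemma on the multiplicative price update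
algorithm): the social welfare of the produced allocation satisfies
`v(S) ≥ (1/(r-1)) * (∑_e p_e^* - m * p₀)`, where `p_e^* = p₀ * r ^ ℓ_e^*` is
the final price of good `e` and `ℓ_e^*` the total number of copies of `e`
allocated.
-/

open scoped BigOperators

/-- Total number of copies of good `e` allocated. -/
def totalLoad {U : Type} [DecidableEq U] {n : ℕ} (S : Fin n → Finset U)
    (e : U) : ℕ :=
  (Finset.univ.filter fun j : Fin n => e ∈ S j).card

open Finset in
lemma load_sum_aux {U : Type} [DecidableEq U] {n : ℕ} (S : Fin n → Finset U)
    (e : U) (r : ℝ) :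
    ∑ i ∈ Finset.univ.filter (fun i : Fin n => e ∈ S i), r ^ load S i e
      = ∑ k ∈ Finset.range (totalLoad S e), r ^ k := by
  set T := Finset.univ.filter (fun i : Fin n => e ∈ S i) with hT
  have hload : ∀ i, load S i e = (T.filter (· < i)).card := by
    intro i
    unfold load
    congr 1
    ext j
    simp [hT, and_comm]
  have hmono : ∀ i ∈ T, ∀ i' ∈ T, i < i' → load S i e < load S i' e := by
    intro i hi i' hi' hlt
    rw [hload, hload]
    apply Finset.card_lt_card
    constructor
    · intro j hj
      simp only [mem_filter] at hj ⊢
      exact ⟨hj.1, hj.2.trans hlt⟩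
    · intro hsub
      have := hsub (Finset.mem_filter.mpr ⟨hi, hlt⟩)
      simp at this
  have hinj : Set.InjOn (fun i => load S i e) T := by
    intro a ha b hb hab
    by_contra hne
    rcases lt_or_gt_of_ne hne with h | h
    · exact absurd hab (ne_of_lt (hmono a ha b hb h))
    · exact absurd hab.symm (ne_of_lt (hmono b hb a ha h))
  have himg : T.image (fun i => load S i e) = Finset.range T.card := by
    apply Finset.eq_of_subset_of_card_le
    · intro k hk
      simp only [mem_image] at hk
      obtain ⟨i, hi, rfl⟩ := hk
      rw [Finset.mem_range, hload]
      calc (T.filter (· < i)).card ≤ (T.erase i).card := by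
            apply Finset.card_le_card
            intro j hj
            simp only [mem_filter] at hj
            exact Finset.mem_erase.mpr ⟨ne_of_lt hj.2, hj.1⟩
        _ < T.card := Finset.card_erase_lt_of_mem hi
    · rw [Finset.card_range, Finset.card_image_of_injOn hinj]
  have hcard : totalLoad S e = T.card := rfl
  rw [hcard, ← himg, Finset.sum_image (fun a ha b hb h => hinj ha hb h)]

theorem multiplicativePriceUpdate_welfare_ge_prices
    {U : Type} [Fintype U] [DecidableEq U] {n : ℕ}
    (v : Fin n → Finset U → ℝ) (S : Fin n → Finset U)
    (p₀ r : ℝ) (hp₀ : 0 < p₀) (hr : 1 < r)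
    (hv : ∀ i T, 0 ≤ v i T)
    -- each allocated set has valuation at least the sum of the current prices:
    (halg : ∀ i : Fin n, (∑ e ∈ S i, p₀ * r ^ load S i e) ≤ v i (S i)) :
    (1 / (r - 1)) * ((∑ e : U, p₀ * r ^ totalLoad S e) - (Fintype.card U) * p₀)
      ≤ ∑ i, v i (S i) := by
  have hrne : r ≠ 1 := ne_of_gt hr
  have key : ∑ i, ∑ e ∈ S i, p₀ * r ^ load S i e
      = ∑ e : U, p₀ * ((r ^ totalLoad S e - 1) / (r - 1)) := by
    calc ∑ i, ∑ e ∈ S i, p₀ * r ^ load S i e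
        = ∑ i, ∑ e : U, if e ∈ S i then p₀ * r ^ load S i e else 0 := by
          refine Finset.sum_congr rfl fun i _ => ?_
          rw [Finset.sum_ite_mem, Finset.univ_inter]
      _ = ∑ e : U, ∑ i, if e ∈ S i then p₀ * r ^ load S i e else 0 :=
          Finset.sum_comm
      _ = ∑ e : U, ∑ i ∈ Finset.univ.filter (fun i : Fin n => e ∈ S i),
            p₀ * r ^ load S i e := by
          refine Finset.sum_congr rfl fun e _ => (Finset.sum_filter _ _).symm
      _ = ∑ e : U, p₀ * ∑ i ∈ Finset.univ.filter (fun i : Fin n => e ∈ S i),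
            r ^ load S i e := by
          refine Finset.sum_congr rfl fun e _ => (Finset.mul_sum _ _ _).symm
      _ = ∑ e : U, p₀ * ((r ^ totalLoad S e - 1) / (r - 1)) := by
          refine Finset.sum_congr rfl fun e _ => ?_
          rw [load_sum_aux, geom_sum_eq hrne]
  have heq : (1 / (r - 1)) * ((∑ e : U, p₀ * r ^ totalLoad S e)
      - (Fintype.card U) * p₀)
      = ∑ e : U, p₀ * ((r ^ totalLoad S e - 1) / (r - 1)) := by
    have h1 : (∑ e : U, p₀ * r ^ totalLoad S e) - (Fintype.card U) * p₀
        = ∑ e : U, (p₀ * r ^ totalLoad S e - p₀) := by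
      rw [Finset.sum_sub_distrib, Finset.sum_const, nsmul_eq_mul,
        Finset.card_univ]
    rw [h1, Finset.mul_sum]
    refine Finset.sum_congr rfl fun e _ => ?_
    field_simp
  rw [heq, ← key]
  exact Finset.sum_le_sum fun i _ => halg i
end

section
/- For the multiplicative price update algorithm with supply b per good, the social welfare of the produced allocation satisfies v(S) >= OPT - b * sum over goods e of p_e^*, where OPT is the optimal social welfare of a feasible allocation and p_e^* is the final price of good e. -/
/-!
STATEMENT 7 (second bound of Lemma on the multiplicative price update
algorithm): the social welfare of the produced allocation satisfies
`v(S) ≥ OPT - b * ∑_e p_e^*`, where `OPT` is the welfare of an optimal feasible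
allocation `T` (each good allocated to at most `b` bidders) and `p_e^*` is the
final price of good `e`.
-/

open scoped BigOperators

theorem multiplicativePriceUpdate_welfare_ge_opt
    {U : Type} [Fintype U] [DecidableEq U] {n : ℕ}
    (𝒮 : Fin n → Finset (Finset U))   -- demanded collections
    (v : Fin n → Finset U → ℝ) (S : Fin n → Finset U)
    (p₀ r : ℝ) (b : ℕ) (hp₀ : 0 < p₀) (hr : 1 < r)
    (hv : ∀ i T, 0 ≤ v i T)
    -- the algorithm allocates to each bidder a most valuable demanded set among
    -- those whose valuation is at least the sum of the current prices:
    (hmax : ∀ (i : Fin n) (T : Finset U), T ∈ 𝒮 i →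
      (∑ e ∈ T, p₀ * r ^ load S i e) ≤ v i T → v i T ≤ v i (S i))
    (hS : ∀ i, 0 ≤ v i (S i))
    -- an (optimal) feasible allocation `T`:
    (T : Fin n → Finset U) (hT : ∀ i, T i ∈ 𝒮 i)
    (hTfeas : ∀ e : U, (Finset.univ.filter fun j : Fin n => e ∈ T j).card ≤ b) :
    (∑ i, v i (T i)) - b * (∑ e : U, p₀ * r ^ totalLoad S e)
      ≤ ∑ i, v i (S i) := by
  have hr0 : (0:ℝ) < r := lt_trans one_pos hr
  set f : U → ℝ := fun e => p₀ * r ^ totalLoad S e with hf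
  have hf0 : ∀ e, 0 ≤ f e := fun e => mul_nonneg hp₀.le (pow_nonneg hr0.le _)
  have hload : ∀ i e, load S i e ≤ totalLoad S e := by
    intro i e
    apply Finset.card_le_card
    intro j hj
    simp only [Finset.mem_filter] at *
    tauto
  have key : ∀ i, v i (T i) ≤ v i (S i) + ∑ e ∈ T i, f e := by
    intro i
    have hsumnn : 0 ≤ ∑ e ∈ T i, f e := Finset.sum_nonneg fun e _ => hf0 e
    by_cases h : (∑ e ∈ T i, p₀ * r ^ load S i e) ≤ v i (T i)
    · have := hmax i (T i) (hT i) h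
      linarith
    · push_neg at h
      have hle : v i (T i) ≤ ∑ e ∈ T i, f e := by
        refine h.le.trans (Finset.sum_le_sum fun e _ => ?_)
        exact mul_le_mul_of_nonneg_left
          (pow_le_pow_right₀ hr.le (hload i e)) hp₀.le
      linarith [hS i]
  have hsum : ∑ i, v i (T i) ≤ ∑ i, v i (S i) + ∑ i, ∑ e ∈ T i, f e := by
    rw [← Finset.sum_add_distrib]
    exact Finset.sum_le_sum fun i _ => key i
  have hswap : ∑ i, ∑ e ∈ T i, f e
      = ∑ e : U, ((Finset.univ.filter fun j : Fin n => e ∈ T j).card : ℝ) * f e := by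
    have : ∀ i : Fin n, ∑ e ∈ T i, f e = ∑ e : U, if e ∈ T i then f e else 0 := by
      intro i
      rw [Finset.sum_ite_mem]
      congr 1
      simp
    simp_rw [this]
    rw [Finset.sum_comm]
    congr 1
    ext e
    rw [Finset.sum_ite, Finset.sum_const, Finset.sum_const]
    simp
  have hbound : ∑ e : U, ((Finset.univ.filter fun j : Fin n => e ∈ T j).card : ℝ) * f e
      ≤ (b:ℝ) * ∑ e : U, f e := by
    rw [Finset.mul_sum]
    refine Finset.sum_le_sum fun e _ => ?_
    exact mul_le_mul_of_nonneg_right (by exact_mod_cast hTfeas e) (hf0 e)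
  have := hsum.trans (by linarith [hswap ▸ hbound] : ∑ i, v i (S i) + ∑ i, ∑ e ∈ T i, f e ≤ ∑ i, v i (S i) + (b:ℝ) * ∑ e : U, f e)
  linarith
end

section
/- The multiplicative price update algorithm with p_0 = mu/(4bm) and r = (4bm)^{1/b}, where mu/2 <= v_max < mu, produces a feasible allocation S with social welfare v(S) >= OPT / (2*(b*(r-1)+1)), hence an O(b * m^{1/b}) approximation of the optimal social welfare OPT. -/
/-!
STATEMENT 8 (Theorem on Algorithm 1): with `p₀ = μ/(4bm)` and `r = (4bm)^(1/b)`,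
where `μ/2 ≤ v_max < μ`, the multiplicative price update algorithm produces a
feasible allocation `S` (at most `b` copies of each good) whose social welfare
satisfies `v(S) ≥ OPT / (2 * (b*(r-1)+1))`, an `O(b · m^{1/b})` approximation.
-/

open scoped BigOperators

lemma load_lt_of_mem {U : Type} [DecidableEq U] {n : ℕ} (S : Fin n → Finset U)
    {i : Fin n} {e : U} (hi : e ∈ S i) : load S i e < totalLoad S e := by
  classical
  set A := Finset.univ.filter (fun j : Fin n => e ∈ S j) with hA
  have hiA : i ∈ A := by simp [hA, hi]
  have hsub : (Finset.univ.filter fun j : Fin n => j < i ∧ e ∈ S j) ⊆ A.erase i := by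
    intro k hk
    simp only [Finset.mem_filter, Finset.mem_univ, true_and] at hk
    exact Finset.mem_erase.2 ⟨hk.1.ne, by simp [hA, hk.2]⟩
  calc load S i e ≤ (A.erase i).card := Finset.card_le_card hsub
    _ < A.card := Finset.card_erase_lt_of_mem hiA
    _ = totalLoad S e := rfl

lemma load_le_totalLoad {U : Type} [DecidableEq U] {n : ℕ} (S : Fin n → Finset U)
    (i : Fin n) (e : U) : load S i e ≤ totalLoad S e := by
  apply Finset.card_le_card
  intro k hk
  simp only [Finset.mem_filter, Finset.mem_univ, true_and] at hk ⊢
  exact hk.2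

lemma load_strictMono {U : Type} [DecidableEq U] {n : ℕ} (S : Fin n → Finset U)
    {i j : Fin n} {e : U} (hi : e ∈ S i) (hij : i < j) :
    load S i e < load S j e := by
  apply Finset.card_lt_card
  rw [Finset.ssubset_iff_of_subset]
  · exact ⟨i, by simp [hij, hi], by simp⟩
  · intro k hk
    simp only [Finset.mem_filter, Finset.mem_univ, true_and] at hk ⊢
    exact ⟨hk.1.trans hij, hk.2⟩

lemma sum_pow_load {U : Type} [DecidableEq U] {n : ℕ} (S : Fin n → Finset U)
    (r : ℝ) (e : U) :
    ∑ i ∈ Finset.univ.filter (fun j : Fin n => e ∈ S j), r ^ load S i e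
      = ∑ k ∈ Finset.range (totalLoad S e), r ^ k := by
  classical
  set A := Finset.univ.filter (fun j : Fin n => e ∈ S j) with hA
  have hmemA : ∀ {j : Fin n}, j ∈ A ↔ e ∈ S j := by
    intro j; simp [hA]
  have hinj : Set.InjOn (fun i => load S i e) A := by
    intro x hx y hy hxy
    by_contra hne
    rcases lt_or_gt_of_ne (fun h : x = y => hne h) with h | h
    · exact absurd hxy (Nat.ne_of_lt (load_strictMono S (hmemA.1 hx) h))
    · exact absurd hxy.symm (Nat.ne_of_lt (load_strictMono S (hmemA.1 hy) h))
  have himg : A.image (fun i => load S i e) = Finset.range (totalLoad S e) := by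
    apply Finset.eq_of_subset_of_card_le
    · intro k hk
      simp only [Finset.mem_image] at hk
      obtain ⟨i, hiA, hik⟩ := hk
      rw [Finset.mem_range, ← hik]
      exact load_lt_of_mem S (hmemA.1 hiA)
    · rw [Finset.card_range, Finset.card_image_of_injOn hinj]
      rfl
  rw [← himg, Finset.sum_image (fun x hx y hy h => hinj hx hy h)]

lemma sum_swap_mem {U : Type} [Fintype U] [DecidableEq U] {n : ℕ}
    (S : Fin n → Finset U) (F : Fin n → U → ℝ) :
    ∑ i : Fin n, ∑ e ∈ S i, F i e
      = ∑ e : U, ∑ i ∈ Finset.univ.filter (fun j : Fin n => e ∈ S j), F i e := by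
  classical
  calc ∑ i : Fin n, ∑ e ∈ S i, F i e
      = ∑ i : Fin n, ∑ e : U, if e ∈ S i then F i e else 0 := by
        refine Finset.sum_congr rfl fun i _ => ?_
        rw [Finset.sum_ite_mem, Finset.univ_inter]
    _ = ∑ e : U, ∑ i : Fin n, if e ∈ S i then F i e else 0 := Finset.sum_comm
    _ = _ := by
        refine Finset.sum_congr rfl fun e _ => ?_
        rw [Finset.sum_filter]
set_option maxHeartbeats 1000000 in
theorem multiplicativePriceUpdate_approx
    {U : Type} [Fintype U] [DecidableEq U] {n : ℕ}
    (𝒮 : Fin n → Finset (Finset U)) (v : Fin n → Finset U → ℝ)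
    (S : Fin n → Finset U)
    (b : ℕ) (hb : 1 ≤ b) (hm : 1 ≤ Fintype.card U)
    (μ vmax p₀ r : ℝ)
    (hp₀ : p₀ = μ / (4 * b * Fintype.card U))
    (hr : r = (4 * b * Fintype.card U : ℝ) ^ ((1 : ℝ) / b))
    (hμ₁ : μ / 2 ≤ vmax) (hμ₂ : vmax < μ)
    (hv : ∀ i T, 0 ≤ v i T) (hvempty : ∀ i, v i ∅ = 0)
    (hvmax : ∀ (i : Fin n) (T : Finset U), T ∈ 𝒮 i → v i T ≤ vmax)
    (hvmax_att : ∃ (i : Fin n) (T : Finset U), T ∈ 𝒮 i ∧ v i T = vmax)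
    -- the algorithm's guarantees on its output `S`:
    (hexact : ∀ i, S i ∈ 𝒮 i ∨ S i = ∅)
    (halg : ∀ i : Fin n, S i ≠ ∅ →
      (∑ e ∈ S i, p₀ * r ^ load S i e) ≤ v i (S i))
    (hmax : ∀ (i : Fin n) (T : Finset U), T ∈ 𝒮 i →
      (∑ e ∈ T, p₀ * r ^ load S i e) ≤ v i T → v i T ≤ v i (S i)) :
    -- feasibility:
    (∀ e : U, totalLoad S e ≤ b) ∧
    -- approximation guarantee with respect to any feasible allocation:
    (∀ T : Fin n → Finset U, (∀ i, T i ∈ 𝒮 i ∨ T i = ∅) →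
      (∀ e : U, (Finset.univ.filter fun j : Fin n => e ∈ T j).card ≤ b) →
      (∑ i, v i (T i)) / (2 * (b * (r - 1) + 1)) ≤ ∑ i, v i (S i)) := by
  classical
  set m := Fintype.card U with hmdef
  have hm1 : (1:ℝ) ≤ (m:ℝ) := by exact_mod_cast hm
  have hb1 : (1:ℝ) ≤ (b:ℝ) := by exact_mod_cast hb
  have hbne : (b:ℝ) ≠ 0 := by linarith
  have hmne : (m:ℝ) ≠ 0 := by linarith
  have hc1 : (1:ℝ) < 4 * b * m := by nlinarith
  have hc0 : (0:ℝ) < 4 * b * m := lt_trans one_pos hc1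
  have hvmax0 : 0 ≤ vmax := by
    obtain ⟨i, T, _, h⟩ := hvmax_att; rw [← h]; exact hv i T
  have hμ0 : 0 < μ := lt_of_le_of_lt hvmax0 hμ₂
  have hp0 : 0 < p₀ := by rw [hp₀]; positivity
  have hr1 : 1 < r := by
    rw [hr]
    exact (Real.one_lt_rpow_iff_of_pos hc0).2 (Or.inl ⟨hc1, by positivity⟩)
  have hr0 : (0:ℝ) < r := lt_trans one_pos hr1
  have hrb : r ^ b = 4 * b * m := by
    rw [hr, ← Real.rpow_natCast (((4:ℝ) * b * m) ^ ((1:ℝ)/b)) b,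
      ← Real.rpow_mul hc0.le, one_div, inv_mul_cancel₀ hbne, Real.rpow_one]
  have hprb : p₀ * r ^ b = μ := by
    rw [hp₀, hrb]; field_simp
  -- feasibility
  have hfeas : ∀ e : U, totalLoad S e ≤ b := by
    intro e
    by_contra hcon
    push_neg at hcon
    set A := Finset.univ.filter (fun j : Fin n => e ∈ S j) with hAdef
    have hAcard : totalLoad S e = A.card := rfl
    have hAne : A.Nonempty := Finset.card_pos.1 (by omega)
    set i := A.max' hAne with hidef
    have hiA : i ∈ A := A.max'_mem hAne
    have hie : e ∈ S i := by simpa [hAdef] using hiA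
    have hload : b ≤ load S i e := by
      have hsub : A.erase i ⊆ Finset.univ.filter (fun j : Fin n => j < i ∧ e ∈ S j) := by
        intro k hk
        obtain ⟨hki, hkA⟩ := Finset.mem_erase.1 hk
        have hke : e ∈ S k := by simpa [hAdef] using hkA
        have hle : k ≤ i := A.le_max' k hkA
        simp only [Finset.mem_filter, Finset.mem_univ, true_and]
        exact ⟨lt_of_le_of_ne hle hki, hke⟩
      have h1 := Finset.card_le_card hsub
      rw [Finset.card_erase_of_mem hiA] at h1
      have : load S i e = (Finset.univ.filter fun j : Fin n => j < i ∧ e ∈ S j).card := rfl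
      omega
    have hSne : S i ≠ ∅ := fun h => by simp [h] at hie
    have hSi : S i ∈ 𝒮 i := (hexact i).resolve_right hSne
    have h1 : p₀ * r ^ b ≤ ∑ e' ∈ S i, p₀ * r ^ load S i e' := by
      have h2 : p₀ * r ^ b ≤ p₀ * r ^ load S i e :=
        mul_le_mul_of_nonneg_left (pow_le_pow_right₀ hr1.le hload) hp0.le
      refine h2.trans (Finset.single_le_sum (f := fun e' => p₀ * r ^ load S i e')
        (fun e' _ => by positivity) hie)
    have h2 := (halg i hSne).trans (hvmax i (S i) hSi)
    rw [hprb] at h1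
    linarith [h1.trans h2]
  refine ⟨hfeas, ?_⟩
  intro T hT hTfeas
  set W := ∑ i, v i (S i) with hW
  set Q := ∑ e : U, p₀ * r ^ totalLoad S e with hQ
  have hPe0 : ∀ e : U, 0 ≤ p₀ * r ^ totalLoad S e := fun e => by positivity
  have hQ0 : 0 ≤ Q := Finset.sum_nonneg fun e _ => hPe0 e
  have hW0 : 0 ≤ W := Finset.sum_nonneg fun i _ => hv i (S i)
  -- Lemma A : Q - m·p₀ ≤ (r-1)·W
  have hA : Q - m * p₀ ≤ (r - 1) * W := by
    have h1 : ∑ i, ∑ e ∈ S i, p₀ * r ^ load S i e ≤ W := by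
      refine Finset.sum_le_sum fun i _ => ?_
      by_cases h : S i = ∅
      · simp [h, hvempty i]
      · exact halg i h
    have h2 : ∑ i, ∑ e ∈ S i, p₀ * r ^ load S i e
        = ∑ e : U, p₀ * ∑ k ∈ Finset.range (totalLoad S e), r ^ k := by
      rw [sum_swap_mem S (fun i e => p₀ * r ^ load S i e)]
      refine Finset.sum_congr rfl fun e _ => ?_
      rw [← Finset.mul_sum, sum_pow_load]
    have h3 : ∀ e : U, (r - 1) * (p₀ * ∑ k ∈ Finset.range (totalLoad S e), r ^ k)
        = p₀ * r ^ totalLoad S e - p₀ := by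
      intro e
      have hg := geom_sum_mul r (totalLoad S e)
      calc (r - 1) * (p₀ * ∑ k ∈ Finset.range (totalLoad S e), r ^ k)
          = p₀ * ((∑ k ∈ Finset.range (totalLoad S e), r ^ k) * (r - 1)) := by ring
        _ = p₀ * (r ^ totalLoad S e - 1) := by rw [hg]
        _ = p₀ * r ^ totalLoad S e - p₀ := by ring
    have h4 : (r - 1) * (∑ e : U, p₀ * ∑ k ∈ Finset.range (totalLoad S e), r ^ k)
        = Q - m * p₀ := by
      rw [Finset.mul_sum]
      simp_rw [h3]
      rw [Finset.sum_sub_distrib, Finset.sum_const, Finset.card_univ, nsmul_eq_mul, hQ]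
    calc Q - m * p₀
        = (r - 1) * (∑ e : U, p₀ * ∑ k ∈ Finset.range (totalLoad S e), r ^ k) := h4.symm
      _ ≤ (r - 1) * W := by
          apply mul_le_mul_of_nonneg_left _ (by linarith)
          rw [← h2]; exact h1
  -- Lemma B : OPT ≤ W + b·Q
  have hloadmono : ∀ (i : Fin n) (e : U),
      p₀ * r ^ load S i e ≤ p₀ * r ^ totalLoad S e := fun i e =>
    mul_le_mul_of_nonneg_left (pow_le_pow_right₀ hr1.le (load_le_totalLoad S i e)) hp0.le
  have hB : (∑ i, v i (T i)) ≤ W + b * Q := by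
    have h1 : ∀ i : Fin n, v i (T i) ≤ v i (S i) + ∑ e ∈ T i, p₀ * r ^ totalLoad S e := by
      intro i
      have hsnn : 0 ≤ ∑ e ∈ T i, p₀ * r ^ totalLoad S e :=
        Finset.sum_nonneg fun e _ => hPe0 e
      rcases hT i with hTi | hTi
      · by_cases hc : (∑ e ∈ T i, p₀ * r ^ load S i e) ≤ v i (T i)
        · linarith [hmax i (T i) hTi hc]
        · push_neg at hc
          have h2 : (∑ e ∈ T i, p₀ * r ^ load S i e)
              ≤ ∑ e ∈ T i, p₀ * r ^ totalLoad S e :=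
            Finset.sum_le_sum fun e _ => hloadmono i e
          linarith [hv i (S i)]
      · rw [hTi, hvempty i]
        have := hv i (S i)
        simp only [Finset.sum_empty]
        linarith
    calc ∑ i, v i (T i)
        ≤ ∑ i, (v i (S i) + ∑ e ∈ T i, p₀ * r ^ totalLoad S e) :=
          Finset.sum_le_sum fun i _ => h1 i
      _ = W + ∑ i, ∑ e ∈ T i, p₀ * r ^ totalLoad S e := Finset.sum_add_distrib
      _ ≤ W + b * Q := by
          rw [sum_swap_mem T (fun i e => p₀ * r ^ totalLoad S e)]
          have hle : ∑ e : U, ∑ _i ∈ Finset.univ.filter (fun j : Fin n => e ∈ T j),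
                (p₀ * r ^ totalLoad S e)
              ≤ ∑ e : U, (b:ℝ) * (p₀ * r ^ totalLoad S e) := by
            refine Finset.sum_le_sum fun e _ => ?_
            rw [Finset.sum_const, nsmul_eq_mul]
            exact mul_le_mul_of_nonneg_right (by exact_mod_cast hTfeas e) (hPe0 e)
          rw [← Finset.mul_sum] at hle
          linarith
  -- vmax bound : vmax ≤ W + b·Q
  have hC : vmax ≤ W + b * Q := by
    obtain ⟨i0, T0, hT0, hvT0⟩ := hvmax_att
    have hbQ : Q ≤ (b:ℝ) * Q := le_mul_of_one_le_left hQ0 hb1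
    by_cases hc : (∑ e ∈ T0, p₀ * r ^ load S i0 e) ≤ v i0 T0
    · have h1 : v i0 T0 ≤ v i0 (S i0) := hmax i0 T0 hT0 hc
      have h2 : v i0 (S i0) ≤ W :=
        Finset.single_le_sum (fun i _ => hv i (S i)) (Finset.mem_univ i0)
      nlinarith
    · push_neg at hc
      rw [hvT0] at hc
      have h1 : (∑ e ∈ T0, p₀ * r ^ load S i0 e) ≤ ∑ e ∈ T0, p₀ * r ^ totalLoad S e :=
        Finset.sum_le_sum fun e _ => hloadmono i0 e
      have h2 : (∑ e ∈ T0, p₀ * r ^ totalLoad S e) ≤ Q :=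
        Finset.sum_le_sum_of_subset_of_nonneg (Finset.subset_univ T0)
          (fun e _ _ => hPe0 e)
      linarith
  -- combine
  have hbm : (b:ℝ) * m * p₀ = μ / 4 := by
    rw [hp₀]; field_simp
  have key1 : (b:ℝ) * Q - (b:ℝ) * m * p₀ ≤ (b:ℝ) * (r - 1) * W := by
    have h := mul_le_mul_of_nonneg_left hA (by linarith : (0:ℝ) ≤ (b:ℝ))
    nlinarith
  have hpos : 0 < 2 * ((b:ℝ) * (r - 1) + 1) := by nlinarith
  rw [div_le_iff₀ hpos]
  nlinarith [key1, hB, hC, hbm, hμ₁]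
end

section
/- The multiplicative price update algorithm (Algorithm 1, with a fixed bid-independent order of bidders and fixed initial prices) is k-set monotone, and hence truthful without money and with verification for combinatorial auctions with unknown k-minded bidders. -/
/-!
STATEMENT 9 (Theorem on truthfulness of Algorithm 1): the multiplicative price
update algorithm — which processes bidders in a fixed bid-independent order,
offers bidder `i` item prices that do not depend on `i`'s own declaration, and
allocates to `i` a most valuable demanded set among those whose declared value
is at least the sum of the current prices of its goods — is k-set monotone, and
hence truthful without money and with verification for CAs with unknown
k-minded bidders.
-/

open scoped BigOperators

structure Decl (U : Type) [DecidableEq U] where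
  sets : Finset (Finset U)
  val : Finset U → NNReal

variable {U ι : Type} [DecidableEq U] [DecidableEq ι]

/-- `evalOn d T = d.val (σ(T|d))`: `d`'s valuation of an awarded set `T`. -/
def evalOn (d : Decl U) (T : Finset U) : NNReal :=
  (d.sets.filter (· ⊆ T)).sup d.val

def alloc (A : (ι → Decl U) → ι → Finset U)
    (bs : ι → Decl U) (i : ι) (d : Decl U) : Finset U :=
  A (Function.update bs i d) i

/-- Truthfulness without money and with verification. -/
def Truthful (A : (ι → Decl U) → ι → Finset U) : Prop :=
  ∀ (i : ι) (bs : ι → Decl U) (t z : Decl U),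
    evalOn z (alloc A bs i z) ≤ evalOn t (alloc A bs i z) →
    evalOn t (alloc A bs i z) ≤ evalOn t (alloc A bs i t)

/-- k-set monotonicity. -/
def KSetMonotone (A : (ι → Decl U) → ι → Finset U) : Prop :=
  ∀ (i : ι) (bs : ι → Decl U) (a b : Decl U),
    evalOn a (alloc A bs i a) ≤ evalOn b (alloc A bs i a) →
    evalOn b (alloc A bs i a) ≤ evalOn b (alloc A bs i b)

theorem multiplicativePriceUpdate_truthful
    (A : (ι → Decl U) → ι → Finset U)
    (price : (ι → Decl U) → ι → U → NNReal)  -- prices seen by each bidder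
    -- the prices offered to bidder `i` do not depend on `i`'s own declaration
    -- (the processing order is fixed and bid-independent):
    (hPriceIndep : ∀ (bs : ι → Decl U) (i : ι) (d d' : Decl U),
      price (Function.update bs i d) i = price (Function.update bs i d') i)
    -- exactness:
    (hExact : ∀ bs i, A bs i ∈ (bs i).sets ∨ A bs i = ∅)
    -- the allocated set is above its threshold:
    (hAlloc : ∀ (bs : ι → Decl U) (i : ι), A bs i ∈ (bs i).sets →
      (∑ e ∈ A bs i, price bs i e) ≤ (bs i).val (A bs i))
    -- and has maximum declared value among demanded sets above their threshold:
    (hMax : ∀ (bs : ι → Decl U) (i : ι) (T : Finset U), T ∈ (bs i).sets →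
      (∑ e ∈ T, price bs i e) ≤ (bs i).val T →
      (bs i).val T ≤ evalOn (bs i) (A bs i)) :
    KSetMonotone A ∧ Truthful A := by
  have hmono : KSetMonotone A := by
    intro i bs a b hab
    set bsa := Function.update bs i a with hbsa
    set bsb := Function.update bs i b with hbsb
    set T0 := A bsa i with hT0
    show evalOn b T0 ≤ evalOn b (A bsb i)
    rcases (b.sets.filter (· ⊆ T0)).eq_empty_or_nonempty with hemp | hne
    · have : evalOn b T0 = 0 := by
        simp [evalOn, hemp]
      rw [this]; exact zero_le
    · obtain ⟨U0, hU0mem, hU0⟩ := Finset.exists_mem_eq_sup _ hne b.val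
      have hU0sets : U0 ∈ b.sets := (Finset.mem_filter.mp hU0mem).1
      have hU0sub : U0 ⊆ T0 := (Finset.mem_filter.mp hU0mem).2
      have hval : evalOn b T0 = b.val U0 := hU0
      have hprice : price bsa i = price bsb i := hPriceIndep bs i a b
      have hsum : (∑ e ∈ U0, price bsb i e) ≤ b.val U0 := by
        rcases hExact bsa i with hT | hT
        · have hTa : T0 ∈ a.sets := by
            simpa [hbsa, Function.update_self] using hT
          have h1 : (∑ e ∈ U0, price bsa i e) ≤ (∑ e ∈ T0, price bsa i e) :=
            Finset.sum_le_sum_of_subset hU0sub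
          have h2 : (∑ e ∈ T0, price bsa i e) ≤ a.val T0 := by
            have := hAlloc bsa i hT
            simpa [hbsa, Function.update_self] using this
          have h3 : a.val T0 ≤ evalOn a T0 :=
            Finset.le_sup (Finset.mem_filter.mpr ⟨hTa, subset_rfl⟩)
          calc (∑ e ∈ U0, price bsb i e) = (∑ e ∈ U0, price bsa i e) := by
                rw [hprice]
            _ ≤ a.val T0 := le_trans h1 h2
            _ ≤ evalOn a T0 := h3
            _ ≤ evalOn b T0 := hab
            _ = b.val U0 := hval
        · have : U0 = ∅ := Finset.subset_empty.mp (hT ▸ hU0sub)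
          simp [this]
      have := hMax bsb i U0 (by simpa [hbsb, Function.update_self] using hU0sets)
        (by simpa [hbsb, Function.update_self] using hsum)
      rw [hval]
      simpa [hbsb, Function.update_self] using this
  exact ⟨hmono, fun i bs t z h => hmono i bs z t h⟩
end

section
/- The greedy algorithm that processes all nk elementary bids (i, S, b_i(S)) in nonincreasing order of bid value and accepts a bid iff the bidder has not yet been served and the set S is disjoint from all previously accepted sets, achieves approximation ratio min{m, d+1} for the social welfare of combinatorial auctions with k-minded bidders, where d is the maximum cardinality of a demanded set and m the number of goods. -/
/-!
STATEMENT 11 (Theorem on the greedy algorithm): the greedy algorithm — process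
all elementary bids `(i, S, b_i(S))` in nonincreasing order of bid value and
accept a bid iff its bidder has not been served yet and its set is disjoint
from all previously accepted sets — is a `min{m, d+1}`-approximation of the
optimal social welfare for unit-supply CAs with k-minded bidders, where `d` is
the maximum cardinality of a demanded set and `m` the number of goods.

The greedy output `A` is characterized by: it is exact and feasible, and every
rejected bid `(i, T)` is blocked either by an accepted bid of no smaller value
whose set intersects `T`, or by an accepted bid of no smaller value of the same
bidder.
-/

open scoped BigOperators

theorem greedy_approximation
    {U ι : Type} [Fintype U] [DecidableEq U] [Fintype ι] [DecidableEq ι]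
    (𝒮 : ι → Finset (Finset U))         -- demanded collections
    (v : ι → Finset U → NNReal)          -- bid values
    (d : ℕ)
    (hd : ∀ i S, S ∈ 𝒮 i → S.card ≤ d)
    (hne : ∀ i S, S ∈ 𝒮 i → S ≠ ∅)
    (hpos : ∀ i S, S ∈ 𝒮 i → 0 < v i S)  -- non-zero bids
    (hv0 : ∀ i, v i ∅ = 0)
    (A : ι → Finset U)                    -- the greedy allocation
    (hexact : ∀ i, A i ∈ 𝒮 i ∨ A i = ∅)
    (hdisj : ∀ i j, i ≠ j → Disjoint (A i) (A j))
    (hgreedy : ∀ i T, T ∈ 𝒮 i → T ≠ A i →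
      (∃ j, A j ≠ ∅ ∧ ¬ Disjoint (A j) T ∧ v i T ≤ v j (A j)) ∨
      (A i ∈ 𝒮 i ∧ v i T ≤ v i (A i))) :
    ∀ B : ι → Finset U, (∀ i, B i ∈ 𝒮 i ∨ B i = ∅) →
      (∀ i j, i ≠ j → Disjoint (B i) (B j)) →
      (∑ i, v i (B i)) ≤ ((min (Fintype.card U) (d + 1) : ℕ) : NNReal) * ∑ i, v i (A i) := by
  intro B hB hBdisj
  classical
  set K : ℕ := min (Fintype.card U) (d + 1) with hK
  set s : Finset ι := Finset.univ.filter (fun i => B i ≠ ∅) with hs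
  -- membership in s gives B i ∈ 𝒮 i
  have hBs : ∀ i ∈ s, B i ∈ 𝒮 i := by
    intro i hi
    rcases hB i with h | h
    · exact h
    · exact absurd h (by simpa [hs] using hi)
  -- charging function: for each i ∈ s there is a greedy winner j covering it
  have H : ∀ i : ι, ∃ j, i ∈ s →
      A j ∈ 𝒮 j ∧ v i (B i) ≤ v j (A j) ∧ (j ≠ i → ¬ Disjoint (A j) (B i)) := by
    intro i
    by_cases hi : i ∈ s
    · have hBSi : B i ∈ 𝒮 i := hBs i hi
      by_cases hEq : B i = A i
      · exact ⟨i, fun _ => ⟨hEq ▸ hBSi, le_of_eq (by rw [hEq]), fun h => absurd rfl h⟩⟩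
      · rcases hgreedy i (B i) hBSi hEq with ⟨j, hAj, hnd, hle⟩ | ⟨hAi, hle⟩
        · have : A j ∈ 𝒮 j := (hexact j).resolve_right hAj
          exact ⟨j, fun _ => ⟨this, hle, fun _ => hnd⟩⟩
        · exact ⟨i, fun _ => ⟨hAi, hle, fun h => absurd rfl h⟩⟩
    · exact ⟨i, fun h => absurd h hi⟩
  choose f hf using H
  -- fibers
  have key : ∀ j : ι,
      ((s.filter (fun i => f i = j)).card : NNReal) * v j (A j) ≤ (K : NNReal) * v j (A j) := by
    intro j
    rcases hexact j with hAj | hAj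
    · -- U is nonempty since A j is
      have hAjne : (A j).Nonempty := Finset.nonempty_iff_ne_empty.2 (hne j (A j) hAj)
      haveI : Nonempty U := ⟨hAjne.choose⟩
      -- witness elements of B i
      have HE : ∀ i : ι, ∃ x : U, i ∈ s → x ∈ B i := by
        intro i
        by_cases hi : i ∈ s
        · have : B i ≠ ∅ := by simpa [hs] using hi
          rcases Finset.nonempty_iff_ne_empty.2 this with ⟨x, hx⟩
          exact ⟨x, fun _ => hx⟩
        · exact ⟨Classical.arbitrary _, fun h => absurd h hi⟩
      choose e he using HE
      -- witness elements in A (f i) ∩ B i when f i ≠ i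
      have HW : ∀ i : ι, ∃ x : U, i ∈ s → f i ≠ i → x ∈ A (f i) ∧ x ∈ B i := by
        intro i
        by_cases hi : i ∈ s
        · by_cases hfi : f i ≠ i
          · have hnd := (hf i hi).2.2 hfi
            rw [Finset.not_disjoint_iff] at hnd
            rcases hnd with ⟨x, hx1, hx2⟩
            exact ⟨x, fun _ _ => ⟨hx1, hx2⟩⟩
          · exact ⟨Classical.arbitrary _, fun _ h => absurd h hfi⟩
        · exact ⟨Classical.arbitrary _, fun h => absurd h hi⟩
      choose w hw using HW
      -- bound the fiber cardinality
      set I : Finset ι := s.filter (fun i => f i = j) with hI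
      have hcard1 : I.card ≤ Fintype.card U := by
        have : ∀ i ∈ I, e i ∈ (Finset.univ : Finset U) := fun _ _ => Finset.mem_univ _
        have hinj : ∀ i₁ ∈ I, ∀ i₂ ∈ I, e i₁ = e i₂ → i₁ = i₂ := by
          intro i₁ h₁ i₂ h₂ heq
          by_contra hne'
          have h₁s : i₁ ∈ s := (Finset.mem_filter.1 h₁).1
          have h₂s : i₂ ∈ s := (Finset.mem_filter.1 h₂).1
          exact Finset.disjoint_left.1 (hBdisj i₁ i₂ hne') (he i₁ h₁s) (heq ▸ he i₂ h₂s)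
        simpa [Finset.card_univ] using Finset.card_le_card_of_injOn e this hinj
      have hcard2 : I.card ≤ d + 1 := by
        have hsub : I ⊆ insert j (I.erase j) := by
          intro x hx
          by_cases hxj : x = j
          · simp [hxj]
          · exact Finset.mem_insert_of_mem (Finset.mem_erase.2 ⟨hxj, hx⟩)
        have herase : (I.erase j).card ≤ (A j).card := by
          have hmaps : ∀ i ∈ I.erase j, w i ∈ A j := by
            intro i hi
            rcases Finset.mem_erase.1 hi with ⟨hij, hiI⟩
            rcases Finset.mem_filter.1 hiI with ⟨his, hfij⟩
            have := (hw i his (by rw [hfij]; exact fun h => hij h.symm)).1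
            rwa [hfij] at this
          have hinj : ∀ i₁ ∈ I.erase j, ∀ i₂ ∈ I.erase j, w i₁ = w i₂ → i₁ = i₂ := by
            intro i₁ h₁ i₂ h₂ heq
            by_contra hne'
            rcases Finset.mem_erase.1 h₁ with ⟨hij₁, hiI₁⟩
            rcases Finset.mem_erase.1 h₂ with ⟨hij₂, hiI₂⟩
            rcases Finset.mem_filter.1 hiI₁ with ⟨h₁s, hf₁⟩
            rcases Finset.mem_filter.1 hiI₂ with ⟨h₂s, hf₂⟩
            have hw₁ := (hw i₁ h₁s (by rw [hf₁]; exact fun h => hij₁ h.symm)).2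
            have hw₂ := (hw i₂ h₂s (by rw [hf₂]; exact fun h => hij₂ h.symm)).2
            exact Finset.disjoint_left.1 (hBdisj i₁ i₂ hne') hw₁ (heq ▸ hw₂)
          exact Finset.card_le_card_of_injOn w hmaps hinj
        calc I.card ≤ (insert j (I.erase j)).card := Finset.card_le_card hsub
          _ ≤ (I.erase j).card + 1 := Finset.card_insert_le _ _
          _ ≤ (A j).card + 1 := by omega
          _ ≤ d + 1 := by have := hd j (A j) hAj; omega
      have : I.card ≤ K := le_min hcard1 hcard2
      exact mul_le_mul_of_nonneg_right (by exact_mod_cast this) zero_le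
    · simp [hAj, hv0 j]
  -- putting things together
  have step1 : (∑ i, v i (B i)) = ∑ i ∈ s, v i (B i) := by
    rw [hs]
    refine (Finset.sum_filter_of_ne ?_).symm
    intro i _ hvi
    intro hBi
    exact hvi (by rw [hBi, hv0])
  have step2 : ∑ i ∈ s, v i (B i) ≤ ∑ i ∈ s, v (f i) (A (f i)) :=
    Finset.sum_le_sum (fun i hi => (hf i hi).2.1)
  have step3 : ∑ i ∈ s, v (f i) (A (f i))
      = ∑ j : ι, ∑ i ∈ s.filter (fun i => f i = j), v (f i) (A (f i)) := by
    exact (Finset.sum_fiberwise_of_maps_to (fun i _ => Finset.mem_univ (f i)) _).symm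
  have step4 : ∀ j : ι, ∑ i ∈ s.filter (fun i => f i = j), v (f i) (A (f i))
      = ((s.filter (fun i => f i = j)).card : NNReal) * v j (A j) := by
    intro j
    rw [Finset.sum_congr rfl (fun i hi => by
      rw [(Finset.mem_filter.1 hi).2]), Finset.sum_const, nsmul_eq_mul]
  calc (∑ i, v i (B i)) = ∑ i ∈ s, v i (B i) := step1
    _ ≤ ∑ i ∈ s, v (f i) (A (f i)) := step2
    _ = ∑ j : ι, ∑ i ∈ s.filter (fun i => f i = j), v (f i) (A (f i)) := step3
    _ = ∑ j : ι, ((s.filter (fun i => f i = j)).card : NNReal) * v j (A j) := by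
        exact Finset.sum_congr rfl (fun j _ => step4 j)
    _ ≤ ∑ j : ι, (K : NNReal) * v j (A j) := Finset.sum_le_sum (fun j _ => key j)
    _ = (K : NNReal) * ∑ j, v j (A j) := by rw [Finset.mul_sum]
end

section
/- There exist no payments that augment the greedy algorithm (nonincreasing bid order, accept a bid iff bidder unserved and set disjoint from accepted sets, ties broken toward smaller bidder index) to make a truthful mechanism with money for combinatorial auctions with k-minded bidders, even with known bidders. Concretely, for U = {a, b}, bidder 1 with demanded sets {a} and {b} and bidder 2 single-minded on {a} with value 1, the three valuation profiles v_1 = (1-delta, 0), v_1' = (1+delta, 1), v_1'' = (1-delta, 1-2*delta) for bidder 1 (values of {a} and {b} respectively, 0 < delta < 1/2) yield a cycle in bidder 1's declaration graph of total weight -(1-delta) + delta + 0 = -(1-2*delta) < 0. -/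
theorem greedy_no_payments (δ : ℝ) (hδ0 : 0 < δ) (hδ : δ < 1 / 2)
    (alloc : ℝ × ℝ → Bool)
    (h₁ : alloc (1 - δ, 0) = false)
    (h₂ : alloc (1 + δ, 1) = true)
    (h₃ : alloc (1 - δ, 1 - 2 * δ) = false) :
    ¬ ∃ p : ℝ × ℝ → ℝ, ∀ t d : ℝ × ℝ,
      (if alloc d then t.1 else t.2) - p d ≤ (if alloc t then t.1 else t.2) - p t := by
  rintro ⟨p, hp⟩
  have A := hp (1 - δ, 0) (1 + δ, 1)
  have B := hp (1 + δ, 1) (1 - δ, 1 - 2 * δ)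
  have C := hp (1 - δ, 1 - 2 * δ) (1 - δ, 0)
  simp [h₁, h₂, h₃] at A B C
  linarith
end

section
/- No deterministic truthful mechanism without money with verification for combinatorial auctions with known 2-minded bidders achieves approximation ratio better than 2, even with n = 2 bidders and m = 2 goods and without any computational restriction. -/
/-!
STATEMENT 16 (lower bound 2 for deterministic mechanisms): there is no
deterministic truthful mechanism without money and with verification for CAs
with known 2-minded bidders with approximation ratio better than 2, even with
`n = 2` bidders and `m = 2` goods and with unbounded computation.

Setting: goods `{0,1}`; both bidders publicly demand the singletons `{0}` and
`{1}`.  A declaration of a bidder is a value for each singleton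
(`Fin 2 → NNReal`); a mechanism assigns to each bidder a good (`some j`) or
nothing (`none`), with distinct goods to distinct bidders (feasibility).
-/

open scoped BigOperators

/-- Valuation of an outcome: the declared value of the awarded good. -/
def optVal (v : Fin 2 → NNReal) (o : Option (Fin 2)) : NNReal :=
  o.elim 0 v

/-- Truthfulness without money with verification (known bidders): a lie `z` is
allowed only if the value it declares for the awarded good does not exceed the
true value; then the truthful outcome must be worth at least as much. -/
def Truthful2 (A : (Fin 2 → Fin 2 → NNReal) → Fin 2 → Option (Fin 2)) : Prop :=
  ∀ (i : Fin 2) (bs : Fin 2 → Fin 2 → NNReal) (t z : Fin 2 → NNReal),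
    optVal z (A (Function.update bs i z) i) ≤ optVal t (A (Function.update bs i z) i) →
    optVal t (A (Function.update bs i z) i) ≤ optVal t (A (Function.update bs i t) i)

private lemma arith_contra {δ s ε : ℝ} (hδ : 0 < δ) (hε : ε = δ / 2) (hs0 : 0 ≤ s)
    (hs : s ≤ 1 + ε) (h : 2 + ε ≤ (2 - δ) * s) : False := by
  nlinarith [mul_nonneg hδ.le hs0, mul_nonneg hδ.le (sub_nonneg.2 hs)]

theorem no_deterministic_better_than_two :
    ¬ ∃ (A : (Fin 2 → Fin 2 → NNReal) → Fin 2 → Option (Fin 2)) (δ : ℝ),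
      0 < δ ∧
      -- feasibility: distinct bidders never receive the same good
      (∀ bs (i j : Fin 2), i ≠ j → A bs i ≠ none → A bs i ≠ A bs j) ∧
      Truthful2 A ∧
      -- approximation ratio 2 - δ (better than 2):
      (∀ (bs : Fin 2 → Fin 2 → NNReal) (B : Fin 2 → Option (Fin 2)),
        (∀ i j, i ≠ j → B i ≠ none → B i ≠ B j) →
        ((∑ i, optVal (bs i) (B i) : NNReal) : ℝ) ≤
          (2 - δ) * ((∑ i, optVal (bs i) (A bs i) : NNReal) : ℝ)) := by
  rintro ⟨A, δ, hδ, hfeas, htruth, happrox⟩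
  set ε : NNReal := Real.toNNReal (δ / 2) with hεdef
  have hεR : (ε : ℝ) = δ / 2 := Real.coe_toNNReal _ (by linarith)
  have hεpos : 0 < ε := by
    rw [← NNReal.coe_lt_coe, hεR]; push_cast; linarith
  set t : Fin 2 → NNReal := fun j => if j = 0 then 1 + ε else 1 with ht
  set z : Fin 2 → NNReal := fun j => if j = 0 then 1 + ε else 0 with hz
  set bs1 : Fin 2 → Fin 2 → NNReal := fun _ => t with hbs1
  -- basic bounds
  have htle : ∀ o, optVal t o ≤ 1 + ε := by
    rintro (_ | j)
    · exact zero_le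
    · fin_cases j <;> simp [optVal, ht]
  have hzt : ∀ o, optVal z o ≤ optVal t o := by
    rintro (_ | j)
    · exact le_refl _
    · fin_cases j <;> simp [optVal, ht, hz]
  -- generic contradiction helper
  have contra : ∀ s : NNReal, s ≤ 1 + ε →
      ((2 : ℝ) + (ε : ℝ) ≤ (2 - δ) * (s : ℝ)) → False := by
    intro s h1 h2
    have h1' : (s : ℝ) ≤ 1 + (ε : ℝ) := by
      have := (NNReal.coe_le_coe).2 h1
      push_cast at this; linarith
    exact arith_contra hδ hεR s.coe_nonneg h1' h2
  have hcoe1 : ((1 + ε + 1 : NNReal) : ℝ) = 2 + (ε : ℝ) := by push_cast; ring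
  have hcoe2 : ((1 + (1 + ε) : NNReal) : ℝ) = 2 + (ε : ℝ) := by push_cast; ring
  -- instance 1 approximation
  have hB1 : ∀ i j : Fin 2, i ≠ j →
      (fun i : Fin 2 => if i = 0 then some (0 : Fin 2) else some 1) i ≠ none →
      (fun i : Fin 2 => if i = 0 then some (0 : Fin 2) else some 1) i ≠
      (fun i : Fin 2 => if i = 0 then some (0 : Fin 2) else some 1) j := by decide
  have h1 := happrox bs1 _ hB1
  have hsum1 : (∑ i, optVal (bs1 i)
      ((fun i : Fin 2 => if i = 0 then some (0 : Fin 2) else some 1) i) : NNReal)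
      = 1 + ε + 1 := by
    simp [Fin.sum_univ_two, optVal, hbs1, ht]
  rw [hsum1, hcoe1] at h1
  -- first, both bidders must receive a good
  rcases hA0 : A bs1 0 with _ | g0
  · refine contra (∑ i, optVal (bs1 i) (A bs1 i)) ?_ h1
    rw [Fin.sum_univ_two, hA0]
    simpa [optVal] using htle (A bs1 1)
  rcases hA1 : A bs1 1 with _ | g1
  · refine contra (∑ i, optVal (bs1 i) (A bs1 i)) ?_ h1
    rw [Fin.sum_univ_two, hA1]
    simpa [optVal] using htle (A bs1 0)
  have hne : (some g0 : Option (Fin 2)) ≠ some g1 := by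
    have := hfeas bs1 0 1 (by decide) (by rw [hA0]; simp)
    rw [hA0, hA1] at this; exact this
  fin_cases g0 <;> fin_cases g1
  · exact hne rfl
  · -- bidder 0 gets good 0, bidder 1 gets good 1: bidder 1 lies with z
    have hup : Function.update bs1 1 t = bs1 := by
      have h : t = bs1 1 := rfl
      rw [h]; exact Function.update_eq_self _ _
    set bs2 : Fin 2 → Fin 2 → NNReal := Function.update bs1 1 z with hbs2
    have htr := htruth 1 bs1 t z (hzt (A bs2 1))
    rw [hup, hA1] at htr
    have htr' : optVal t (A bs2 1) ≤ 1 := by simpa [optVal, ht] using htr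
    have hno0 : A bs2 1 ≠ some 0 := by
      intro h; rw [h] at htr'
      simp [optVal, ht] at htr'
      exact hεpos.ne' htr'
    have hval1 : optVal z (A bs2 1) = 0 := by
      rcases h : A bs2 1 with _ | j
      · rfl
      · fin_cases j
        · exact absurd h hno0
        · simp [optVal, hz]
    have hb20 : bs2 0 = t := by
      rw [hbs2]; rw [Function.update_of_ne (by decide)]
    have hb21 : bs2 1 = z := by rw [hbs2]; simp
    have hB2 : ∀ i j : Fin 2, i ≠ j →
        (fun i : Fin 2 => if i = 0 then some (1 : Fin 2) else some 0) i ≠ none →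
        (fun i : Fin 2 => if i = 0 then some (1 : Fin 2) else some 0) i ≠
        (fun i : Fin 2 => if i = 0 then some (1 : Fin 2) else some 0) j := by decide
    have h2 := happrox bs2 _ hB2
    have hsum2 : (∑ i, optVal (bs2 i)
        ((fun i : Fin 2 => if i = 0 then some (1 : Fin 2) else some 0) i) : NNReal)
        = 1 + (1 + ε) := by
      simp [Fin.sum_univ_two, optVal, hb20, hb21, ht, hz]
    rw [hsum2, hcoe2] at h2
    refine contra (∑ i, optVal (bs2 i) (A bs2 i)) ?_ h2
    rw [Fin.sum_univ_two, hb20, hb21, hval1, add_zero]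
    exact htle (A bs2 0)
  · -- bidder 0 gets good 1, bidder 1 gets good 0: bidder 0 lies with z
    have hup : Function.update bs1 0 t = bs1 := by
      have h : t = bs1 0 := rfl
      rw [h]; exact Function.update_eq_self _ _
    set bs2 : Fin 2 → Fin 2 → NNReal := Function.update bs1 0 z with hbs2
    have htr := htruth 0 bs1 t z (hzt (A bs2 0))
    rw [hup, hA0] at htr
    have htr' : optVal t (A bs2 0) ≤ 1 := by simpa [optVal, ht] using htr
    have hno0 : A bs2 0 ≠ some 0 := by
      intro h; rw [h] at htr'
      simp [optVal, ht] at htr'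
      exact hεpos.ne' htr'
    have hval0 : optVal z (A bs2 0) = 0 := by
      rcases h : A bs2 0 with _ | j
      · rfl
      · fin_cases j
        · exact absurd h hno0
        · simp [optVal, hz]
    have hb20 : bs2 0 = z := by rw [hbs2]; simp
    have hb21 : bs2 1 = t := by
      rw [hbs2]; rw [Function.update_of_ne (by decide)]
    have hB2 : ∀ i j : Fin 2, i ≠ j →
        (fun i : Fin 2 => if i = 0 then some (0 : Fin 2) else some 1) i ≠ none →
        (fun i : Fin 2 => if i = 0 then some (0 : Fin 2) else some 1) i ≠
        (fun i : Fin 2 => if i = 0 then some (0 : Fin 2) else some 1) j := by decide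
    have h2 := happrox bs2 _ hB2
    have hsum2 : (∑ i, optVal (bs2 i)
        ((fun i : Fin 2 => if i = 0 then some (0 : Fin 2) else some 1) i) : NNReal)
        = 1 + ε + 1 := by
      simp [Fin.sum_univ_two, optVal, hb20, hb21, ht, hz]
    rw [hsum2, hcoe1] at h2
    refine contra (∑ i, optVal (bs2 i) (A bs2 i)) ?_ h2
    rw [Fin.sum_univ_two, hb20, hb21, hval0, zero_add]
    exact htle (A bs2 1)
  · exact hne rfl
end

section
/- No universally truthful randomized mechanism without money with verification for combinatorial auctions with known 2-minded bidders achieves approximation ratio better than 5/4, even with n = 2 bidders and m = 2 goods. -/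
/-!
STATEMENT 17 (lower bound 5/4 for universally truthful mechanisms): no
universally truthful randomized mechanism (a probability distribution over
deterministic truthful mechanisms) without money and with verification for CAs
with known 2-minded bidders achieves an approximation ratio better than 5/4,
even with `n = 2` bidders and `m = 2` goods.

Setting: goods `{a,b}`; bidder 1 publicly demands `{a,b}` and `{b}` (declaration
`(x,y)`, with monotone valuation `max x y` for `{a,b}` and `y` for `{b}`);
bidder 2 is single-minded on `{a}` (declaration `w`).  An outcome is a pair
`(o₁, o₂)` where `o₁ : Option Bool` is bidder 1's award (`some true = {a,b}`,
`some false = {b}`, `none` = nothing) and `o₂ : Bool` tells whether bidder 2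
gets `{a}`; feasibility: if bidder 1 gets `{a,b}` then bidder 2 gets nothing.
-/

open scoped BigOperators

abbrev Inp : Type := (NNReal × NNReal) × NNReal
abbrev Out : Type := Option Bool × Bool

def val1 (p : NNReal × NNReal) (o : Option Bool) : NNReal :=
  o.elim 0 fun full => if full then max p.1 p.2 else p.2

def val2 (w : NNReal) (o : Bool) : NNReal :=
  if o then w else 0

def welf (inp : Inp) (out : Out) : NNReal :=
  val1 inp.1 out.1 + val2 inp.2 out.2

def Feas (M : Inp → Out) : Prop :=
  ∀ inp, (M inp).1 = some true → (M inp).2 = false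

/-- Truthfulness without money with verification of a deterministic mechanism,
for each of the two bidders. -/
def TruthfulDet (M : Inp → Out) : Prop :=
  (∀ (w : NNReal) (t z : NNReal × NNReal),
    val1 z (M (z, w)).1 ≤ val1 t (M (z, w)).1 →
    val1 t (M (z, w)).1 ≤ val1 t (M (t, w)).1) ∧
  (∀ (p : NNReal × NNReal) (t z : NNReal),
    val2 z (M (p, z)).2 ≤ val2 t (M (p, z)).2 →
    val2 t (M (p, z)).2 ≤ val2 t (M (p, t)).2)

theorem no_universally_truthful_better_than_five_fourths :
    ¬ ∃ (δ : ℝ) (N : ℕ) (M : Fin N → Inp → Out) (prob : Fin N → NNReal),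
      0 < δ ∧ (∑ n, prob n) = 1 ∧
      (∀ n, Feas (M n) ∧ TruthfulDet (M n)) ∧
      -- expected approximation ratio better than 5/4:
      (∀ (inp : Inp) (out : Out), (out.1 = some true → out.2 = false) →
        ((welf inp out : NNReal) : ℝ) ≤
          (5 / 4 - δ) * ∑ n, ((prob n : NNReal) : ℝ) * ((welf inp (M n inp) : NNReal) : ℝ)) := by
  rintro ⟨δ, N, M, prob, hδ, hsum, hM, happrox⟩
  set e : ℝ := min (2 * δ) 1 with he
  have he0 : 0 < e := lt_min (by linarith) one_pos
  have he1 : e ≤ 1 := min_le_right _ _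
  have he2 : e ≤ 2 * δ := min_le_left _ _
  set y' : NNReal := Real.toNNReal (2 - e) with hy'
  have hy'r : (y' : ℝ) = 2 - e := Real.coe_toNNReal _ (by linarith)
  have hy'le : y' ≤ 2 := by
    rw [← NNReal.coe_le_coe, hy'r]; push_cast; linarith
  have hy'lt : (y' : ℝ) < 2 := by rw [hy'r]; linarith
  set I : Inp := (((2 : NNReal), 0), 1) with hI
  set I' : Inp := (((2 : NNReal), y'), 1) with hI'
  -- per-mechanism bound
  have key : ∀ n, ((welf I (M n I) : NNReal) : ℝ) + ((welf I' (M n I') : NNReal) : ℝ) ≤ 4 := by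
    intro n
    obtain ⟨hF, hT1, _⟩ := hM n
    by_cases hc : (M n I).1 = some true
    · have hf := hF I hc
      have hw1 : ((welf I (M n I) : NNReal) : ℝ) = 2 := by
        rw [welf, hc, hf]; simp [val1, val2, hI]
      have hle : val1 ((2 : NNReal), 0) (M n I).1 ≤ val1 ((2 : NNReal), y') (M n I).1 := by
        rw [hc]; simp [val1]
      have htr := hT1 1 ((2 : NNReal), y') ((2 : NNReal), 0) hle
      rw [hc] at htr
      have h2v : (2 : NNReal) ≤ val1 ((2 : NNReal), y') (M n I').1 := by
        have : val1 ((2 : NNReal), y') (some true) = 2 := by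
          simp [val1, max_eq_left hy'le]
        rw [this] at htr
        exact htr
      have hc' : (M n I').1 = some true := by
        rcases h : (M n I').1 with _ | b
        · rw [h] at h2v; simp [val1] at h2v
        · cases b
          · rw [h] at h2v; simp [val1] at h2v
            exact absurd h2v (by rw [← NNReal.coe_le_coe] at *; push_cast; linarith)
          · rfl
      have hf' := hF I' hc'
      have hw2 : ((welf I' (M n I') : NNReal) : ℝ) = 2 := by
        rw [welf, hc', hf']; simp [val1, val2, hI', max_eq_left hy'le]
      rw [hw1, hw2]; norm_num
    · have hw1 : ((welf I (M n I) : NNReal) : ℝ) ≤ 1 := by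
        have hv1 : val1 ((2 : NNReal), 0) (M n I).1 = 0 := by
          rcases h : (M n I).1 with _ | b
          · simp [val1]
          · cases b
            · simp [val1]
            · exact absurd h hc
        have hv2 : val2 1 (M n I).2 ≤ 1 := by
          rcases (M n I).2 <;> simp [val2]
        have : welf I (M n I) ≤ 1 := by
          rw [welf, hI]; simp only []
          calc val1 ((2:NNReal),0) (M n I).1 + val2 1 (M n I).2
              = 0 + val2 1 (M n I).2 := by rw [hv1]
            _ ≤ 1 := by rw [zero_add]; exact hv2
        exact_mod_cast this
      have hw2 : ((welf I' (M n I') : NNReal) : ℝ) ≤ 3 := by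
        have hv1 : val1 ((2 : NNReal), y') (M n I').1 ≤ 2 := by
          rcases (M n I').1 with _ | b
          · simp [val1]
          · cases b <;> simp [val1, hy'le, max_eq_left hy'le]
        have hv2 : val2 1 (M n I').2 ≤ 1 := by
          rcases (M n I').2 <;> simp [val2]
        have : welf I' (M n I') ≤ 3 := by
          rw [welf, hI']
          calc val1 ((2:NNReal),y') (M n I').1 + val2 1 (M n I').2
              ≤ 2 + 1 := add_le_add hv1 hv2
            _ = 3 := by norm_num
        exact_mod_cast this
      linarith
  -- opt bounds
  have h1 := happrox I (some true, false) (fun _ => rfl)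
  have h2 := happrox I' (some false, true) (by simp)
  have hw1 : ((welf I (some true, false) : NNReal) : ℝ) = 2 := by
    simp [welf, val1, val2, hI]
  have hw2 : ((welf I' (some false, true) : NNReal) : ℝ) = 3 - e := by
    simp [welf, val1, val2, hI']
    rw [hy'r]; ring
  rw [hw1] at h1
  rw [hw2] at h2
  set S1 : ℝ := ∑ n, ((prob n : NNReal) : ℝ) * ((welf I (M n I) : NNReal) : ℝ) with hS1
  set S2 : ℝ := ∑ n, ((prob n : NNReal) : ℝ) * ((welf I' (M n I') : NNReal) : ℝ) with hS2
  have hS1nn : 0 ≤ S1 := Finset.sum_nonneg fun n _ => mul_nonneg (prob n).coe_nonneg (welf I (M n I)).coe_nonneg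
  have hS2nn : 0 ≤ S2 := Finset.sum_nonneg fun n _ => mul_nonneg (prob n).coe_nonneg (welf I' (M n I')).coe_nonneg
  have hSsum : S1 + S2 ≤ 4 := by
    rw [hS1, hS2, ← Finset.sum_add_distrib]
    have : ∀ n ∈ Finset.univ, ((prob n : NNReal) : ℝ) * ((welf I (M n I) : NNReal) : ℝ)
        + ((prob n : NNReal) : ℝ) * ((welf I' (M n I') : NNReal) : ℝ)
        ≤ ((prob n : NNReal) : ℝ) * 4 := by
      intro n _
      rw [← mul_add]
      exact mul_le_mul_of_nonneg_left (key n) (prob n).coe_nonneg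
    calc _ ≤ ∑ n, ((prob n : NNReal) : ℝ) * 4 := Finset.sum_le_sum this
      _ = ((∑ n, prob n : NNReal) : ℝ) * 4 := by push_cast; rw [Finset.sum_mul]
      _ = 4 := by rw [hsum]; norm_num
  nlinarith [mul_nonneg hS1nn hδ.le, mul_nonneg hS2nn hδ.le]
end

section
/- No truthful-in-expectation randomized mechanism without money with verification for combinatorial auctions with known 2-minded bidders achieves approximation ratio at most 1.09, even with n = 2 bidders and m = 2 goods. Formally: let phi = (1+sqrt(5))/2 and rho in [1, 1.09]; there exist no probabilities p, q in [0,1] satisfying simultaneously p >= (phi - rho)/(rho*(phi-1)), 1 - q >= (2 - rho*phi)/(rho*(2-phi)), and q >= (p*phi - 1)/(phi - 1). -/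
/-!
STATEMENT 18 (lower bound 1.09 for truthful-in-expectation mechanisms): no
truthful-in-expectation randomized mechanism without money with verification for
CAs with known 2-minded bidders has approximation ratio at most 1.09 (with
`n = 2` bidders and `m = 2` goods).  Formally: with `φ = (1+√5)/2` the golden
ratio and `ρ ∈ [1, 1.09]`, there are no probabilities `p, q ∈ [0,1]` satisfying
simultaneously
* `p ≥ (φ - ρ)/(ρ(φ - 1))`            (ratio `ρ` on instance `I`),
* `1 - q ≥ (2 - ρφ)/(ρ(2 - φ))`       (ratio `ρ` on instance `I'`), and
* `q ≥ (pφ - 1)/(φ - 1)`              (truthfulness in expectation).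
-/

theorem no_truthful_in_expectation_better_than_109
    (φ ρ p q : ℝ)
    (hφ : φ = (1 + Real.sqrt 5) / 2)
    (hρ1 : 1 ≤ ρ) (hρ2 : ρ ≤ 1.09)
    (hp0 : 0 ≤ p) (hp1 : p ≤ 1) (hq0 : 0 ≤ q) (hq1 : q ≤ 1) :
    ¬ ((φ - ρ) / (ρ * (φ - 1)) ≤ p ∧
       (2 - ρ * φ) / (ρ * (2 - φ)) ≤ 1 - q ∧
       (p * φ - 1) / (φ - 1) ≤ q) := by
  rintro ⟨h1, h2, h3⟩
  have hs0 : (0:ℝ) ≤ Real.sqrt 5 := Real.sqrt_nonneg 5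
  have hs2 : Real.sqrt 5 ^ 2 = 5 := Real.sq_sqrt (by norm_num)
  have hsl : 2.236 ≤ Real.sqrt 5 := by nlinarith
  have hsu : Real.sqrt 5 ≤ 2.23607 := by nlinarith
  have hφl : 1.618 ≤ φ := by rw [hφ]; linarith
  have hφu : φ ≤ 1.618035 := by rw [hφ]; linarith
  have hρ0 : (0:ℝ) < ρ := by linarith
  have hd1 : (0:ℝ) < ρ * (φ - 1) := by nlinarith
  have hd2 : (0:ℝ) < ρ * (2 - φ) := by nlinarith
  have hd3 : (0:ℝ) < φ - 1 := by linarith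
  rw [div_le_iff₀ hd1] at h1
  rw [div_le_iff₀ hd2] at h2
  rw [div_le_iff₀ hd3] at h3
  have hφ2 : φ ^ 2 = φ + 1 := by rw [hφ]; nlinarith
  have hsq : (φ - 1) ^ 2 = 2 - φ := by nlinarith
  have hφ0 : (0:ℝ) ≤ φ := by linarith
  -- chain: φ*(φ-ρ) ≤ φ*p*(ρ*(φ-1)) ≤ (q*(φ-1)+1)*(ρ*(φ-1))
  have e1 := mul_le_mul_of_nonneg_left h1 hφ0
  have e2 := mul_le_mul_of_nonneg_right h3 hd1.le
  have hA : φ * (φ - ρ) ≤ (q * (φ - 1) + 1) * (ρ * (φ - 1)) := by linarith [e1, e2]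
  have hB : q * (ρ * (2 - φ)) ≤ 2 * ρ - 2 := by nlinarith [h2]
  have e3 : q * (ρ * (φ - 1) ^ 2) = q * (ρ * (2 - φ)) := by rw [hsq]
  have hC : φ + 3 ≤ ρ * (2 * φ + 1) := by linarith [hA, hB, e3, hφ2]
  have e4 := mul_le_mul_of_nonneg_right hρ2 hφ0
  linarith [hC, e4, hφu]
end
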